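/- Let S be a semidomain. If S is a finite factorization semidomain, then S[x] is a finite factorization semidomain. -/

import Mathlib

open Polynomial

/-- A witness that the commutative semiring `S` embeds into an integral domain. -/
structure SemidomainWitness (S : Type) [CommSemiring S] : Type 1 where
  R : Type
  [commRing : CommRing R]
  [isDomain : IsDomain R]
  f : S →+* R
  inj : Function.Injective f

/-- A semidomain is a commutative semiring that embeds into an integral domain. -/
def IsSemidomain (S : Type) [CommSemiring S] : Prop :=
  Nonempty (SemidomainWitness S)


/-- A commutative monoid with zero is a finite factorization monoid if every nonzero element has
only finitely many divisors up to associates. -/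
def IsFFS (M : Type) [CommMonoidWithZero M] : Prop :=
  ∀ a : M, a ≠ 0 → ∃ F : Finset M, ∀ b : M, b ∣ a → ∃ c ∈ F, Associated b c

/-- For a semidomain `S`: if `S` is a finite factorization semidomain, then the polynomial
semidomain `S[x]` is a finite factorization semidomain. -/
theorem stmt14 (S : Type) [CommSemiring S] (hS : IsSemidomain S)
    (h : IsFFS S) : IsFFS (Polynomial S) := by
  classical
  obtain ⟨W⟩ := hS
  letI : CommRing W.R := W.commRing
  letI : IsDomain W.R := W.isDomain
  let K := FractionRing W.R
  let g : S →+* K := (algebraMap W.R K).comp W.f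
  have hg : Function.Injective g :=
    (IsFractionRing.injective W.R K).comp W.inj
  let φ : S[X] →+* K[X] := Polynomial.mapRingHom g
  have hφ : Function.Injective φ := Polynomial.map_injective g hg
  have hφlc : ∀ p : S[X], (φ p).leadingCoeff = g p.leadingCoeff := fun p =>
    Polynomial.leadingCoeff_map_of_injective hg p
  intro a ha
  have hφa : φ a ≠ 0 := fun h0 => ha (hφ (by simpa using h0))
  have hlc : a.leadingCoeff ≠ 0 := leadingCoeff_ne_zero.mpr ha
  obtain ⟨D, hD⟩ := h a.leadingCoeff hlc
  -- Finite set of divisor classes in K[X]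
  let nf := UniqueFactorizationMonoid.normalizedFactors (φ a)
  let G : Finset K[X] := (nf.powerset.map (fun t => t.prod)).toFinset
  -- basic facts for divisors
  have hbne : ∀ b : S[X], b ∣ a → b ≠ 0 := by
    rintro b ⟨c, rfl⟩ hb0
    exact ha (by rw [hb0, zero_mul])
  have hlcdvd : ∀ b : S[X], b ∣ a → b.leadingCoeff ∣ a.leadingCoeff := by
    rintro b ⟨c, rfl⟩
    refine ⟨c.leadingCoeff, hg ?_⟩
    rw [map_mul, ← hφlc, ← hφlc, ← hφlc, map_mul, leadingCoeff_mul]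
  have hGmem : ∀ b : S[X], b ∣ a →
      (UniqueFactorizationMonoid.normalizedFactors (φ b)).prod ∈ G ∧
        Associated b.leadingCoeff b.leadingCoeff := by
    intro b hb
    constructor
    · simp only [G, Multiset.mem_toFinset, Multiset.mem_map, Multiset.mem_powerset]
      exact ⟨_, (UniqueFactorizationMonoid.dvd_iff_normalizedFactors_le_normalizedFactors
        (fun h0 => hbne b hb (hφ (by simpa using h0))) hφa).mp (map_dvd φ hb), rfl⟩
    · exact Associated.refl _
  -- the key claim: same class implies associated
  have key : ∀ b b' : S[X], b ∣ a → b' ∣ a →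
      (UniqueFactorizationMonoid.normalizedFactors (φ b)).prod =
        (UniqueFactorizationMonoid.normalizedFactors (φ b')).prod →
      Associated b.leadingCoeff b'.leadingCoeff → Associated b b' := by
    intro b b' hb hb' hnf hlcs
    have hb0 : b ≠ 0 := hbne b hb
    have hb'0 : b' ≠ 0 := hbne b' hb'
    have hφb0 : φ b ≠ 0 := fun h0 => hb0 (hφ (by simpa using h0))
    have hφb'0 : φ b' ≠ 0 := fun h0 => hb'0 (hφ (by simpa using h0))
    have hassoc : Associated (φ b) (φ b') :=
      ((UniqueFactorizationMonoid.prod_normalizedFactors hφb0).symm.trans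
        (hnf ▸ (UniqueFactorizationMonoid.prod_normalizedFactors hφb'0)))
    obtain ⟨u, hu⟩ := hassoc
    obtain ⟨k, hk, hCk⟩ := Polynomial.isUnit_iff.mp u.isUnit
    obtain ⟨v, hv⟩ := hlcs
    have hglcb : g b.leadingCoeff ≠ 0 := fun h0 =>
      (leadingCoeff_ne_zero.mpr hb0) (hg (by simpa using h0))
    have hkv : k = g (v : S) := by
      have h1 : g b.leadingCoeff * k = g b'.leadingCoeff := by
        rw [← hφlc, ← hφlc, ← hu, ← hCk, leadingCoeff_mul, leadingCoeff_C]
      have h2 : g b.leadingCoeff * g (v : S) = g b'.leadingCoeff := by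
        rw [← map_mul, hv]
      exact mul_left_cancel₀ hglcb (h1.trans h2.symm)
    have hfinal : φ (b * C (v : S)) = φ b' := by
      rw [map_mul, ← hu, ← hCk, hkv]
      simp [φ, Polynomial.map_C]
    have : b * C (v : S) = b' := hφ hfinal
    exact ⟨(Units.map (C : S →+* S[X]).toMonoidHom v), this⟩
  -- choose representatives
  let pick : K[X] × S → S[X] := fun p =>
    if hex : ∃ b : S[X], b ∣ a ∧
        (UniqueFactorizationMonoid.normalizedFactors (φ b)).prod = p.1 ∧
        Associated b.leadingCoeff p.2 then hex.choose else 0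
  refine ⟨(G ×ˢ D).image pick, ?_⟩
  intro b hb
  obtain ⟨d, hdD, hbd⟩ := hD b.leadingCoeff (hlcdvd b hb)
  set t := (UniqueFactorizationMonoid.normalizedFactors (φ b)).prod with ht
  have htG : t ∈ G := (hGmem b hb).1
  have hex : ∃ b₀ : S[X], b₀ ∣ a ∧
      (UniqueFactorizationMonoid.normalizedFactors (φ b₀)).prod = t ∧
      Associated b₀.leadingCoeff d := ⟨b, hb, rfl, hbd⟩
  refine ⟨pick (t, d), Finset.mem_image_of_mem pick (Finset.mem_product.mpr ⟨htG, hdD⟩), ?_⟩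
  have hpick : pick (t, d) = hex.choose := dif_pos hex
  obtain ⟨hd1, hd2, hd3⟩ := hex.choose_spec
  rw [hpick]
  exact (key _ _ hb hd1 hd2.symm (hbd.trans hd3.symm)).symm.symm
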